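/- Fix ℓ, h with 0 ≤ ℓ < 1/4 < h ≤ 1, ℓ' = max(ℓ, 1 − 3h). There exists a measurement dependent local distribution P on {0,1}^4 (of the form P(a,b,x,y) = ∑_λ ρ(λ) q_λ(x,y) α_λ(a,x) β_λ(b,y) with ℓ ≤ q_λ(x,y) ≤ h and deterministic α_λ, β_λ) which is nonsignaling, has uniform marginal inputs P(x,y) := ∑_{a,b} P(a,b,x,y) = 1/4 for all x,y, and achieves ∑_{a,b,x,y} (−1)^{a+b+x·y} P(a,b,x,y) = 1 − 2ℓ', so that the conditional CHSH value ∑_{abxy}(−1)^{a+b+xy} P(ab|xy) equals 4(1 − 2ℓ'). -/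
import Mathlib

set_option maxHeartbeats 2000000

private def bxf : ℕ → Fin 2
  | 0 => 0 | 1 => 0 | 2 => 1 | 3 => 1 | 4 => 0 | 5 => 0 | 6 => 1 | _ => 1

private def byf : ℕ → Fin 2
  | 0 => 0 | 1 => 1 | 2 => 0 | 3 => 1 | 4 => 0 | 5 => 1 | 6 => 0 | _ => 1

private def Af : ℕ → Fin 2 → Fin 2
  | 0, x => 1 - x | 1, _ => 0 | 2, x => x | 3, _ => 0
  | 4, x => x | 5, _ => 1 | 6, x => 1 - x | _, _ => 1

private def Bf : ℕ → Fin 2 → Fin 2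
  | 0, y => y | 1, y => y | 2, _ => 0 | 3, _ => 0
  | 4, y => 1 - y | 5, y => 1 - y | 6, _ => 1 | _, _ => 1

private noncomputable def qf (m : ℝ) (l : ℕ) (x y : Fin 2) : ℝ :=
  if x = bxf l ∧ y = byf l then m else (1 - m) / 3

private noncomputable def Pf (m : ℝ) (a b x y : Fin 2) : ℝ :=
  ∑ l ∈ Finset.range 8, (1/8 : ℝ) * qf m l x y *
      (if Af l x = a then (1:ℝ) else 0) * (if Bf l y = b then (1:ℝ) else 0)

private lemma Pf_margB (m : ℝ) (a x y : Fin 2) :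
    ∑ b : Fin 2, Pf m a b x y = 1 / 8 := by
  fin_cases a <;> fin_cases x <;> fin_cases y <;>
    (simp only [Pf, qf, Af, Bf, bxf, byf, Fin.sum_univ_two, Finset.sum_range_succ,
      Finset.sum_range_zero]
     norm_num
     try ring)

private lemma Pf_margA (m : ℝ) (b x y : Fin 2) :
    ∑ a : Fin 2, Pf m a b x y = 1 / 8 := by
  fin_cases b <;> fin_cases x <;> fin_cases y <;>
    (simp only [Pf, qf, Af, Bf, bxf, byf, Fin.sum_univ_two, Finset.sum_range_succ,
      Finset.sum_range_zero]
     norm_num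
     try ring)

private lemma Pf_chsh (m : ℝ) :
    (∑ a : Fin 2, ∑ b : Fin 2, ∑ x : Fin 2, ∑ y : Fin 2,
        (-1 : ℝ) ^ ((a : ℕ) + (b : ℕ) + (x : ℕ) * (y : ℕ)) * Pf m a b x y) =
      1 - 2 * m := by
  simp only [Pf, qf, Af, Bf, bxf, byf, Fin.sum_univ_two, Finset.sum_range_succ,
    Finset.sum_range_zero]
  norm_num
  ring

theorem stmt_13 (ℓ h : ℝ) (hℓ0 : 0 ≤ ℓ) (hℓ : ℓ < 1 / 4) (hh : 1 / 4 < h) (hh1 : h ≤ 1) :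
    ∃ (Λ : Finset ℕ) (ρ : ℕ → ℝ)
      (q : ℕ → Fin 2 → Fin 2 → ℝ)
      (α β : ℕ → Fin 2 → Fin 2)  -- deterministic local responses
      (P : Fin 2 → Fin 2 → Fin 2 → Fin 2 → ℝ),
      (∀ l ∈ Λ, 0 ≤ ρ l) ∧ (∑ l ∈ Λ, ρ l = 1) ∧
      (∀ l ∈ Λ, ∀ x y, ℓ ≤ q l x y ∧ q l x y ≤ h) ∧
      (∀ l ∈ Λ, ∑ x : Fin 2, ∑ y : Fin 2, q l x y = 1) ∧
      (∀ a b x y, P a b x y = ∑ l ∈ Λ, ρ l * q l x y *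
        (if α l x = a then (1:ℝ) else 0) * (if β l y = b then (1:ℝ) else 0)) ∧
      -- uniform observed inputs
      (∀ x y, ∑ a : Fin 2, ∑ b : Fin 2, P a b x y = 1 / 4) ∧
      -- nonsignaling
      (∀ a x y y', ∑ b : Fin 2, P a b x y = ∑ b : Fin 2, P a b x y') ∧
      (∀ b x x' y, ∑ a : Fin 2, P a b x y = ∑ a : Fin 2, P a b x' y) ∧
      -- full-probability CHSH value
      (∑ a : Fin 2, ∑ b : Fin 2, ∑ x : Fin 2, ∑ y : Fin 2,
          (-1 : ℝ) ^ ((a : ℕ) + (b : ℕ) + (x : ℕ) * (y : ℕ)) * P a b x y) =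
        1 - 2 * max ℓ (1 - 3 * h) ∧
      -- conditional CHSH value
      (∑ a : Fin 2, ∑ b : Fin 2, ∑ x : Fin 2, ∑ y : Fin 2,
          (-1 : ℝ) ^ ((a : ℕ) + (b : ℕ) + (x : ℕ) * (y : ℕ)) * (P a b x y / (1 / 4))) =
        4 * (1 - 2 * max ℓ (1 - 3 * h)) := by
  set m : ℝ := max ℓ (1 - 3 * h) with hm
  have hmℓ : ℓ ≤ m := le_max_left _ _
  have hm3h : 1 - 3 * h ≤ m := le_max_right _ _
  have hm14 : m < 1 / 4 := by apply max_lt hℓ; linarith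
  have hmh : m ≤ h := by apply max_le (by linarith); linarith
  have hq1 : ℓ ≤ (1 - m) / 3 := by linarith
  have hq2 : (1 - m) / 3 ≤ h := by linarith
  refine ⟨Finset.range 8, fun _ => (1/8 : ℝ), qf m, Af, Bf, Pf m,
    ?_, ?_, ?_, ?_, fun _ _ _ _ => rfl, ?_, ?_, ?_, ?_, ?_⟩
  · intro l _; norm_num
  · simp
  · intro l _ x y
    unfold qf
    split_ifs
    · exact ⟨hmℓ, hmh⟩
    · exact ⟨hq1, hq2⟩
  · intro l hl
    simp only [Finset.mem_range] at hl
    interval_cases l <;>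
      (simp only [qf, bxf, byf, Fin.sum_univ_two]; norm_num; try ring)
  · intro x y
    have e0 := Pf_margB m 0 x y
    have e1 := Pf_margB m 1 x y
    simp only [Fin.sum_univ_two] at e0 e1 ⊢
    linarith
  · intro a x y y'
    rw [Pf_margB, Pf_margB]
  · intro b x x' y
    rw [Pf_margA, Pf_margA]
  · exact Pf_chsh m
  · simp only [← mul_div_assoc, ← Finset.sum_div]
    rw [Pf_chsh m]
    ring
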